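/- Let L ≥ 1, let σ > 0, G ≠ 0, and P > 0 be real numbers, let h₁, h₂ ∈ ℂ^L, and let ħ ∈ ℂ. Define the stacked channel vector h = (h₁ ; G ħ h₂) ∈ ℂ^{2L} and R_n = σ² · blockdiag(I_L, I_L + G² h₂ h₂†). Then P · h† R_n⁻¹ h = γ₁ + γ₂ γ₃ / (γ₂ + ς), where γ₁ = P‖h₁‖²/σ², γ₂ = ‖h₂‖²/σ², γ₃ = P|ħ|²/σ², and ς = 1/(σ² G²). -/
import Mathlib

open Matrix

/-- The total noise covariance matrix `R_n = σ² · blockdiag(I_L, I_L + G² h₂ h₂†)`. -/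
noncomputable def noiseCov (L : ℕ) (σ G : ℝ) (h₂ : Fin L → ℂ) :
    Matrix (Fin L ⊕ Fin L) (Fin L ⊕ Fin L) ℂ :=
  ((σ : ℂ) ^ 2) • Matrix.fromBlocks (1 : Matrix (Fin L) (Fin L) ℂ) 0 0
    ((1 : Matrix (Fin L) (Fin L) ℂ) + ((G : ℂ) ^ 2) • Matrix.vecMulVec h₂ (star h₂))

/-- The stacked effective channel vector `h = (h₁ ; G hbar h₂) ∈ ℂ^{2L}`. -/
def stackedChannel {L : ℕ} (G : ℝ) (hbar : ℂ) (h₁ h₂ : Fin L → ℂ) : Fin L ⊕ Fin L → ℂ :=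
  Sum.elim h₁ (fun i => (G : ℂ) * hbar * h₂ i)

/-- star of a vector dotted with itself is the (real) sum of squared norms. -/
lemma star_dot_self {L : ℕ} (f : Fin L → ℂ) :
    (star f ⬝ᵥ f : ℂ) = ((∑ i, Complex.normSq (f i) : ℝ) : ℂ) := by
  simp only [dotProduct, Pi.star_apply, Complex.ofReal_sum]
  exact Finset.sum_congr rfl fun i _ => (Complex.normSq_eq_conj_mul_self).symm

theorem stmt_5 (L : ℕ) (hL : 1 ≤ L) (σ G P : ℝ) (hσ : 0 < σ) (hG : G ≠ 0) (hP : 0 < P)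
    (h₁ h₂ : Fin L → ℂ) (hbar : ℂ) :
    (P : ℂ) * (star (stackedChannel G hbar h₁ h₂) ⬝ᵥ
        (noiseCov L σ G h₂)⁻¹.mulVec (stackedChannel G hbar h₁ h₂))
      = (((P * (∑ i, Complex.normSq (h₁ i)) / σ ^ 2
          + ((∑ i, Complex.normSq (h₂ i)) / σ ^ 2) * (P * Complex.normSq hbar / σ ^ 2)
            / ((∑ i, Complex.normSq (h₂ i)) / σ ^ 2 + 1 / (σ ^ 2 * G ^ 2)) : ℝ)) : ℂ) := by
  classical
  set S1 : ℝ := ∑ i, Complex.normSq (h₁ i) with hS1def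
  set S2 : ℝ := ∑ i, Complex.normSq (h₂ i) with hS2def
  have hS2nn : 0 ≤ S2 := Finset.sum_nonneg fun i _ => Complex.normSq_nonneg _
  set c : ℝ := 1 + G ^ 2 * S2 with hcdef
  have hc0 : (0:ℝ) < c := by positivity
  have hcC : (c : ℂ) ≠ 0 := by exact_mod_cast hc0.ne'
  set V : Matrix (Fin L) (Fin L) ℂ := Matrix.vecMulVec h₂ (star h₂) with hVdef
  set g : ℂ := ((G : ℝ) : ℂ) ^ 2 with hgdef
  set k : ℂ := g / (c : ℂ) with hkdef
  have hdot : (star h₂ ⬝ᵥ h₂ : ℂ) = (S2 : ℂ) := star_dot_self h₂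
  have hVV : V * V = (S2 : ℂ) • V := by
    ext i j
    simp only [hVdef, Matrix.mul_apply, Matrix.vecMulVec_apply, Matrix.smul_apply,
      smul_eq_mul, Pi.star_apply]
    calc ∑ m, h₂ i * star (h₂ m) * (h₂ m * star (h₂ j))
        = (∑ m, star (h₂ m) * h₂ m) * (h₂ i * star (h₂ j)) := by
          rw [Finset.sum_mul]; exact Finset.sum_congr rfl fun m _ => by ring
      _ = (S2 : ℂ) * (h₂ i * star (h₂ j)) := by
          rw [show (∑ m, star (h₂ m) * h₂ m) = (star h₂ ⬝ᵥ h₂ : ℂ) from rfl, hdot]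
  have hcoef : g - k - g * k * (S2 : ℂ) = 0 := by
    rw [hkdef]
    have hcC' : (c : ℂ) = 1 + g * (S2 : ℂ) := by rw [hcdef, hgdef]; push_cast; ring
    field_simp
    rw [hcC']; ring
  have hD : ((1 : Matrix (Fin L) (Fin L) ℂ) + g • V) * (1 - k • V) = 1 := by
    have h2 : (g • V) * (k • V) = (g * k * (S2 : ℂ)) • V := by
      rw [smul_mul_assoc, mul_smul_comm, hVV, smul_smul, smul_smul]
    calc (1 + g • V) * (1 - k • V)
        = 1 - k • V + (g • V - (g • V) * (k • V)) := by
          simp only [add_mul, mul_sub, one_mul, mul_one]; abel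
      _ = 1 + (g - k - g * k * (S2 : ℂ)) • V := by
          rw [h2, sub_smul, sub_smul]; abel
      _ = 1 := by rw [hcoef, zero_smul, add_zero]
  set M : Matrix (Fin L ⊕ Fin L) (Fin L ⊕ Fin L) ℂ :=
    (((σ : ℝ) : ℂ) ^ 2)⁻¹ • Matrix.fromBlocks (1 : Matrix (Fin L) (Fin L) ℂ) 0 0
      ((1 : Matrix (Fin L) (Fin L) ℂ) - k • V) with hMdef
  have hσ2 : (((σ : ℝ) : ℂ) ^ 2) ≠ 0 := by
    exact_mod_cast pow_ne_zero 2 (Complex.ofReal_ne_zero.mpr hσ.ne')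
  have hmul : noiseCov L σ G h₂ * M = 1 := by
    rw [noiseCov, hMdef, Matrix.smul_mul, Matrix.mul_smul, smul_smul,
      mul_inv_cancel₀ hσ2, one_smul, Matrix.fromBlocks_multiply]
    simp only [Matrix.one_mul, Matrix.mul_zero, Matrix.zero_mul, Matrix.mul_one,
      add_zero, zero_add, Matrix.zero_mul]
    rw [← hVdef, ← hgdef, hD, Matrix.fromBlocks_one]
  have hinv : (noiseCov L σ G h₂)⁻¹ = M := Matrix.inv_eq_right_inv hmul
  rw [hinv]
  set v : Fin L → ℂ := fun i => ((G : ℝ) : ℂ) * hbar * h₂ i with hvdef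
  have hstack : stackedChannel G hbar h₁ h₂ = Sum.elim h₁ v := rfl
  have hstar : star (Sum.elim h₁ v) = Sum.elim (star h₁) (star v) := by
    ext i; cases i <;> rfl
  have hVv : V *ᵥ v = (((G : ℝ) : ℂ) * hbar * (S2 : ℂ)) • h₂ := by
    ext i
    simp only [hVdef, Matrix.mulVec, dotProduct, Matrix.vecMulVec_apply, hvdef,
      Pi.smul_apply, smul_eq_mul]
    calc ∑ m, h₂ i * star (h₂ m) * (((G : ℝ) : ℂ) * hbar * h₂ m)
        = (∑ m, star (h₂ m) * h₂ m) * (((G : ℝ) : ℂ) * hbar * h₂ i) := by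
          rw [Finset.sum_mul]; exact Finset.sum_congr rfl fun m _ => by ring
      _ = ((G : ℝ) : ℂ) * hbar * (S2 : ℂ) * h₂ i := by
          rw [show (∑ m, star (h₂ m) * h₂ m) = (star h₂ ⬝ᵥ h₂ : ℂ) from rfl, hdot]; ring
  have hdp1 : (star h₁ ⬝ᵥ h₁ : ℂ) = (S1 : ℂ) := star_dot_self h₁
  have hdpv : (star v ⬝ᵥ v : ℂ) = g * (Complex.normSq hbar : ℂ) * (S2 : ℂ) := by
    simp only [dotProduct, Pi.star_apply, hvdef, star_mul', Complex.star_def, Complex.conj_ofReal]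
    calc ∑ m, ((G : ℝ) : ℂ) * star hbar * star (h₂ m) * (((G : ℝ) : ℂ) * hbar * h₂ m)
        = (∑ m, star (h₂ m) * h₂ m) * (((G : ℝ) : ℂ) ^ 2 * (hbar * star hbar)) := by
          rw [Finset.sum_mul]; exact Finset.sum_congr rfl fun m _ => by ring
      _ = g * (Complex.normSq hbar : ℂ) * (S2 : ℂ) := by
          rw [show (∑ m, star (h₂ m) * h₂ m) = (star h₂ ⬝ᵥ h₂ : ℂ) from rfl, hdot,
            show hbar * star hbar = (Complex.normSq hbar : ℂ) from Complex.mul_conj hbar,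
            hgdef]; ring
  have hdpvh : (star v ⬝ᵥ h₂ : ℂ) = ((G : ℝ) : ℂ) * star hbar * (S2 : ℂ) := by
    simp only [dotProduct, Pi.star_apply, hvdef, star_mul', Complex.star_def, Complex.conj_ofReal]
    calc ∑ m, ((G : ℝ) : ℂ) * star hbar * star (h₂ m) * h₂ m
        = (∑ m, star (h₂ m) * h₂ m) * (((G : ℝ) : ℂ) * star hbar) := by
          rw [Finset.sum_mul]; exact Finset.sum_congr rfl fun m _ => by ring
      _ = ((G : ℝ) : ℂ) * star hbar * (S2 : ℂ) := by
          rw [show (∑ m, star (h₂ m) * h₂ m) = (star h₂ ⬝ᵥ h₂ : ℂ) from rfl, hdot]; ring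
  rw [hstack, hMdef, Matrix.smul_mulVec, Matrix.fromBlocks_mulVec]
  simp only [Sum.elim_comp_inl, Sum.elim_comp_inr, Matrix.one_mulVec, Matrix.zero_mulVec,
    add_zero, zero_add, Matrix.sub_mulVec, Matrix.smul_mulVec, hVv]
  rw [hstar]
  rw [dotProduct_smul, sumElim_dotProduct_sumElim, hdp1,
    dotProduct_sub, hdpv, smul_smul, dotProduct_smul, hdpvh]
  simp only [smul_eq_mul]
  rw [show k * (((G : ℝ) : ℂ) * hbar * (S2 : ℂ)) * (((G : ℝ) : ℂ) * star hbar * (S2 : ℂ))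
      = k * g * (hbar * star hbar) * ((S2 : ℂ)) ^ 2 from by rw [hgdef]; ring,
    show hbar * star hbar = ((Complex.normSq hbar : ℝ) : ℂ) from Complex.mul_conj hbar,
    hkdef, hgdef]
  have hreal : P * ((σ ^ 2)⁻¹ * (S1 + (G ^ 2 * Complex.normSq hbar * S2
      - G ^ 2 / c * G ^ 2 * Complex.normSq hbar * S2 ^ 2)))
      = P * S1 / σ ^ 2 + (S2 / σ ^ 2) * (P * Complex.normSq hbar / σ ^ 2)
          / (S2 / σ ^ 2 + 1 / (σ ^ 2 * G ^ 2)) := by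
    have hσR : (σ : ℝ) ^ 2 ≠ 0 := pow_ne_zero 2 hσ.ne'
    have hGR : (G : ℝ) ^ 2 ≠ 0 := pow_ne_zero 2 hG
    have hden : S2 / σ ^ 2 + 1 / (σ ^ 2 * G ^ 2) ≠ 0 := by
      have : 0 < S2 / σ ^ 2 + 1 / (σ ^ 2 * G ^ 2) := by positivity
      exact this.ne'
    rw [hcdef]
    field_simp
    ring
  calc (P : ℂ) * ((((σ : ℝ) : ℂ) ^ 2)⁻¹ * ((S1 : ℂ) + (((G : ℝ) : ℂ) ^ 2 * (Complex.normSq hbar : ℂ) * (S2 : ℂ)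
        - ((G : ℝ) : ℂ) ^ 2 / (c : ℂ) * ((G : ℝ) : ℂ) ^ 2 * (Complex.normSq hbar : ℂ) * ((S2 : ℂ)) ^ 2)))
      = ((P * ((σ ^ 2)⁻¹ * (S1 + (G ^ 2 * Complex.normSq hbar * S2
          - G ^ 2 / c * G ^ 2 * Complex.normSq hbar * S2 ^ 2))) : ℝ) : ℂ) := by push_cast; ring
    _ = _ := by rw [hreal]
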